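/- Let H be a bialgebra over a field K and C a right H-comodule coalgebra. Then every finite subset F of C is contained in a finite-dimensional subspace D of C that is simultaneously a right H-subcomodule and a subcoalgebra of C. -/

import Mathlib

open TensorProduct LinearMap

/-- `D` is a subcoalgebra of the `K`-coalgebra `C`. -/
def IsSubcoalgebra {K C : Type*} [CommSemiring K] [AddCommMonoid C] [Module K C]
    [Coalgebra K C] (D : Submodule K C) : Prop :=
  ∀ x ∈ D, Coalgebra.comul (R := K) x ∈
    LinearMap.range (TensorProduct.map D.subtype D.subtype)


noncomputable section FinThmAux

namespace FinThm

variable {K : Type*} [Field K]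

variable {V W U X : Type*} [AddCommGroup V] [Module K V] [AddCommGroup W] [Module K W]
  [AddCommGroup U] [Module K U] [AddCommGroup X] [Module K X]

/-- Contract the right tensor factor with a functional. -/
def ctR (f : W →ₗ[K] K) : V ⊗[K] W →ₗ[K] V :=
  (TensorProduct.rid K V).toLinearMap ∘ₗ LinearMap.lTensor V f

/-- Contract the left tensor factor with a functional. -/
def ctL (f : V →ₗ[K] K) : V ⊗[K] W →ₗ[K] W :=
  (TensorProduct.lid K W).toLinearMap ∘ₗ LinearMap.rTensor W f

@[simp] lemma ctR_tmul (f : W →ₗ[K] K) (v : V) (w : W) :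
    ctR f (v ⊗ₜ[K] w) = f w • v := by simp [ctR]

@[simp] lemma ctL_tmul (f : V →ₗ[K] K) (v : V) (w : W) :
    ctL f (v ⊗ₜ[K] w) = f v • w := by simp [ctL]

lemma eq_zero_of_forall_ctR (t : V ⊗[K] W) (h : ∀ f : W →ₗ[K] K, ctR f t = 0) : t = 0 := by
  classical
  let b := Module.Basis.ofVectorSpace K W
  let e : V ⊗[K] W ≃ₗ[K] _ :=
    (TensorProduct.congr (LinearEquiv.refl K V) b.repr).trans
      (TensorProduct.finsuppScalarRight K K V _)
  have key : ∀ (s : V ⊗[K] W) i, e s i = ctR (b.coord i) s := by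
    intro s i
    induction s using TensorProduct.induction_on with
    | zero => simp
    | tmul v w => simp [e, Module.Basis.coord_apply]
    | add x y hx hy => simp only [map_add, Finsupp.add_apply, hx, hy]
  have he : e t = 0 := by
    ext i
    rw [key, h]
    simp
  simpa using (map_eq_zero_iff e e.injective).mp he

lemma eq_zero_of_forall_ctL (t : V ⊗[K] W) (h : ∀ f : V →ₗ[K] K, ctL f t = 0) : t = 0 := by
  have hc : ∀ f : V →ₗ[K] K, ctR f (TensorProduct.comm K V W t) = 0 := by
    intro f
    have : ctR (V := W) f ∘ₗ (TensorProduct.comm K V W).toLinearMap = ctL f := by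
      apply TensorProduct.ext'
      intro v w
      simp
    calc ctR f ((TensorProduct.comm K V W) t)
        = (ctR f ∘ₗ (TensorProduct.comm K V W).toLinearMap) t := rfl
      _ = ctL f t := by rw [this]
      _ = 0 := h f
  have := eq_zero_of_forall_ctR _ hc
  simpa using (_root_.map_eq_zero_iff _ (TensorProduct.comm K V W).injective).mp this


variable (D : Submodule K V)

/-- Over a field, an idempotent endomorphism fixing exactly (at least) `D`. -/
lemma exists_projection :
    ∃ e : V →ₗ[K] V, (∀ x ∈ D, e x = x) ∧ ∃ e' : V →ₗ[K] D, e = D.subtype ∘ₗ e' := by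
  obtain ⟨q, hq⟩ := Submodule.exists_isCompl D
  refine ⟨D.subtype ∘ₗ Submodule.projectionOnto D q hq, fun x hx => ?_, _, rfl⟩
  simp [Submodule.projectionOnto_apply_left hq ⟨x, hx⟩]


lemma mem_range_rTensor_of_ctR (t : V ⊗[K] W) (D : Submodule K V)
    (h : ∀ f : W →ₗ[K] K, ctR f t ∈ D) :
    t ∈ LinearMap.range (LinearMap.rTensor W D.subtype) := by
  obtain ⟨e, he, e', rfl⟩ := exists_projection D
  have hz : LinearMap.rTensor W (LinearMap.id - D.subtype ∘ₗ e') t = 0 := by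
    apply eq_zero_of_forall_ctR
    intro f
    have hcomm : ∀ (g : V →ₗ[K] V) (s : V ⊗[K] W), ctR f (LinearMap.rTensor W g s) = g (ctR f s) := by
      intro g s
      induction s using TensorProduct.induction_on with
      | zero => simp
      | tmul v w => simp
      | add x y hx hy => simp [map_add, hx, hy]
    rw [hcomm]
    simp only [LinearMap.sub_apply, LinearMap.id_apply, LinearMap.coe_comp, Function.comp_apply]
    have : D.subtype (e' ((ctR f) t)) = (D.subtype ∘ₗ e') ((ctR f) t) := rfl
    rw [this, he _ (h f), sub_self]
  have : LinearMap.rTensor W (D.subtype ∘ₗ e') t = t := by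
    have h2 := hz
    rw [LinearMap.rTensor_sub] at h2
    simp only [LinearMap.sub_apply, LinearMap.rTensor_id, LinearMap.id_coe, id_eq] at h2
    exact (sub_eq_zero.mp h2).symm
  refine ⟨LinearMap.rTensor W e' t, ?_⟩
  rw [← LinearMap.rTensor_comp_apply]
  exact this

lemma ctL_comm_lTensor (f : V →ₗ[K] K) (g : W →ₗ[K] U) (s : V ⊗[K] W) :
    ctL f (LinearMap.lTensor V g s) = g (ctL f s) := by
  induction s using TensorProduct.induction_on with
  | zero => simp
  | tmul v w => simp
  | add x y hx hy => simp [map_add, hx, hy]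

lemma mem_range_lTensor_of_ctL (t : V ⊗[K] W) (D : Submodule K W)
    (h : ∀ f : V →ₗ[K] K, ctL f t ∈ D) :
    t ∈ LinearMap.range (LinearMap.lTensor V D.subtype) := by
  obtain ⟨e, he, e', rfl⟩ := exists_projection D
  have hz : LinearMap.lTensor V (LinearMap.id - D.subtype ∘ₗ e') t = 0 := by
    apply eq_zero_of_forall_ctL
    intro f
    rw [ctL_comm_lTensor]
    simp only [LinearMap.sub_apply, LinearMap.id_apply, LinearMap.coe_comp, Function.comp_apply]
    have : D.subtype (e' ((ctL f) t)) = (D.subtype ∘ₗ e') ((ctL f) t) := rfl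
    rw [this, he _ (h f), sub_self]
  have : LinearMap.lTensor V (D.subtype ∘ₗ e') t = t := by
    have h2 := hz
    rw [LinearMap.lTensor_sub] at h2
    simp only [LinearMap.sub_apply, LinearMap.lTensor_id, LinearMap.id_coe, id_eq] at h2
    exact (sub_eq_zero.mp h2).symm
  refine ⟨LinearMap.lTensor V e' t, ?_⟩
  rw [← LinearMap.lTensor_comp_apply]
  exact this

/-- `D ⊗ C ∩ C ⊗ D = D ⊗ D` over a field, in range form. -/
lemma mem_range_map_of_ranges (t : V ⊗[K] V) (D : Submodule K V)
    (h1 : t ∈ LinearMap.range (LinearMap.rTensor V D.subtype))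
    (h2 : t ∈ LinearMap.range (LinearMap.lTensor V D.subtype)) :
    t ∈ LinearMap.range (TensorProduct.map D.subtype D.subtype) := by
  obtain ⟨e, he, e', rfl⟩ := exists_projection D
  obtain ⟨s1, hs1⟩ := h1
  obtain ⟨s2, hs2⟩ := h2
  have hr : LinearMap.rTensor V (D.subtype ∘ₗ e') t = t := by
    rw [← hs1, ← LinearMap.rTensor_comp_apply]
    have : (D.subtype ∘ₗ e') ∘ₗ D.subtype = D.subtype := by
      ext x
      exact he _ x.2
    rw [this]
  have hl : LinearMap.lTensor V (D.subtype ∘ₗ e') t = t := by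
    rw [← hs2, ← LinearMap.lTensor_comp_apply]
    have : (D.subtype ∘ₗ e') ∘ₗ D.subtype = D.subtype := by
      ext x
      exact he _ x.2
    rw [this]
  refine ⟨TensorProduct.map e' e' t, ?_⟩
  have : TensorProduct.map D.subtype D.subtype ∘ₗ TensorProduct.map e' e' =
      LinearMap.lTensor V (D.subtype ∘ₗ e') ∘ₗ LinearMap.rTensor V (D.subtype ∘ₗ e') := by
    rw [← TensorProduct.map_comp, LinearMap.lTensor_comp_rTensor]
  calc (TensorProduct.map D.subtype D.subtype) ((TensorProduct.map e' e') t)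
      = (TensorProduct.map D.subtype D.subtype ∘ₗ TensorProduct.map e' e') t := rfl
    _ = LinearMap.lTensor V (D.subtype ∘ₗ e') (LinearMap.rTensor V (D.subtype ∘ₗ e') t) := by
        rw [this]; rfl
    _ = t := by rw [hr, hl]

/-- Contractions of a fixed tensor on the right side span a finite-dimensional space. -/
lemma exists_finset_ctR (t : V ⊗[K] W) :
    ∃ G : Finset V, ∀ f : W →ₗ[K] K, ctR f t ∈ Submodule.span K (G : Set V) := by
  classical
  obtain ⟨s, hs⟩ := TensorProduct.exists_finset t
  refine ⟨s.image Prod.fst, fun f => ?_⟩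
  rw [hs, map_sum]
  refine Submodule.sum_mem _ fun p hp => ?_
  rw [ctR_tmul]
  exact Submodule.smul_mem _ _ (Submodule.subset_span (by simp; exact ⟨p.2, hp⟩))

lemma exists_finset_ctL (t : V ⊗[K] W) :
    ∃ G : Finset W, ∀ f : V →ₗ[K] K, ctL f t ∈ Submodule.span K (G : Set W) := by
  classical
  obtain ⟨s, hs⟩ := TensorProduct.exists_finset t
  refine ⟨s.image Prod.snd, fun f => ?_⟩
  rw [hs, map_sum]
  refine Submodule.sum_mem _ fun p hp => ?_
  rw [ctL_tmul]
  exact Submodule.smul_mem _ _ (Submodule.subset_span (by simp; exact ⟨p.1, hp⟩))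

/-- If a linear map sends all pure tensors `v ⊗ w` with `w ∈ D` into `N`, it sends the
range of `lTensor V D.subtype` into `N`. -/
lemma image_lTensor_range_mem (Θ : V ⊗[K] W →ₗ[K] U) (D : Submodule K W) (N : Submodule K U)
    (h : ∀ (v : V), ∀ w ∈ D, Θ (v ⊗ₜ[K] w) ∈ N) :
    ∀ t ∈ LinearMap.range (LinearMap.lTensor V D.subtype), Θ t ∈ N := by
  rintro _ ⟨s, rfl⟩
  induction s using TensorProduct.induction_on with
  | zero => simp
  | tmul v w => simpa using h v w.1 w.2
  | add x y hx hy => rw [map_add, map_add]; exact N.add_mem hx hy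

lemma image_rTensor_range_mem (Θ : V ⊗[K] W →ₗ[K] U) (D : Submodule K V) (N : Submodule K U)
    (h : ∀ v ∈ D, ∀ (w : W), Θ (v ⊗ₜ[K] w) ∈ N) :
    ∀ t ∈ LinearMap.range (LinearMap.rTensor W D.subtype), Θ t ∈ N := by
  rintro _ ⟨s, rfl⟩
  induction s using TensorProduct.induction_on with
  | zero => simp
  | tmul v w => simpa using h v.1 v.2 w
  | add x y hx hy => rw [map_add, map_add]; exact N.add_mem hx hy

@[simp] lemma ctR_f_zero (t : V ⊗[K] W) : ctR (0 : W →ₗ[K] K) t = 0 := by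
  simp [ctR]

@[simp] lemma ctR_f_add (f g : W →ₗ[K] K) (t : V ⊗[K] W) :
    ctR (f + g) t = ctR f t + ctR g t := by
  simp [ctR, LinearMap.lTensor_add]

lemma ctR_comm_rTensor (f : W →ₗ[K] K) (g : V →ₗ[K] U) (s : V ⊗[K] W) :
    ctR f (LinearMap.rTensor W g s) = g (ctR f s) := by
  induction s using TensorProduct.induction_on with
  | zero => simp
  | tmul v w => simp
  | add x y hx hy => simp [map_add, hx, hy]

lemma ctR_comp_lTensor (f : W →ₗ[K] K) (g : X →ₗ[K] W) (s : V ⊗[K] X) :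
    ctR f (LinearMap.lTensor V g s) = ctR (f ∘ₗ g) s := by
  induction s using TensorProduct.induction_on with
  | zero => simp
  | tmul v w => simp
  | add x y hx hy => simp [map_add, hx, hy]

lemma ctL_comp_rTensor (f : V →ₗ[K] K) (g : X →ₗ[K] V) (s : X ⊗[K] W) :
    ctL f (LinearMap.rTensor W g s) = ctL (f ∘ₗ g) s := by
  induction s using TensorProduct.induction_on with
  | zero => simp
  | tmul v w => simp
  | add x y hx hy => simp [map_add, hx, hy]

/-- The functional `v ⊗ w ↦ f v * g w`. -/
def pair (f : V →ₗ[K] K) (g : W →ₗ[K] K) : V ⊗[K] W →ₗ[K] K :=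
  (TensorProduct.lid K K).toLinearMap ∘ₗ TensorProduct.map f g

@[simp] lemma pair_tmul (f : V →ₗ[K] K) (g : W →ₗ[K] K) (v : V) (w : W) :
    pair f g (v ⊗ₜ[K] w) = f v * g w := by
  simp [pair, smul_eq_mul]

lemma ctR_ctR (f : W →ₗ[K] K) (g : X →ₗ[K] K) (u : (V ⊗[K] W) ⊗[K] X) :
    ctR f (ctR g u) = ctR (pair f g) (TensorProduct.assoc K V W X u) := by
  have : (ctR f ∘ₗ ctR g : (V ⊗[K] W) ⊗[K] X →ₗ[K] V) =
      ctR (pair f g) ∘ₗ (TensorProduct.assoc K V W X).toLinearMap := by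
    apply TensorProduct.ext_threefold
    intro x y z
    simp [smul_smul, mul_comm]
  exact LinearMap.congr_fun this u

lemma ctL_ctL (f : W →ₗ[K] K) (g : V →ₗ[K] K) (u : (V ⊗[K] W) ⊗[K] X) :
    ctL f (ctL g (TensorProduct.assoc K V W X u)) = ctL (pair g f) u := by
  have : (ctL f ∘ₗ ctL g ∘ₗ (TensorProduct.assoc K V W X).toLinearMap :
      (V ⊗[K] W) ⊗[K] X →ₗ[K] X) = ctL (pair g f) := by
    apply TensorProduct.ext_threefold
    intro x y z
    simp [smul_smul]
  exact LinearMap.congr_fun this u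

lemma ctL_ctR (f : V →ₗ[K] K) (g : X →ₗ[K] K) (u : (V ⊗[K] W) ⊗[K] X) :
    ctL f (ctR g u) = ctR g (ctL f (TensorProduct.assoc K V W X u)) := by
  have : (ctL f ∘ₗ ctR g : (V ⊗[K] W) ⊗[K] X →ₗ[K] W) =
      ctR g ∘ₗ ctL f ∘ₗ (TensorProduct.assoc K V W X).toLinearMap := by
    apply TensorProduct.ext_threefold
    intro x y z
    simp [TensorProduct.smul_tmul', smul_smul, mul_comm]
  exact LinearMap.congr_fun this u

section Main

variable {H : Type*} [Ring H] [Bialgebra K H]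
  {C : Type*} [AddCommGroup C] [Module K C] [Coalgebra K C]

/-- The right "hit" action of a functional on `H` via the coaction `ρ`. -/
def act (ρ : C →ₗ[K] C ⊗[K] H) (f : H →ₗ[K] K) : C →ₗ[K] C := ctR f ∘ₗ ρ

/-- `Λ_f c = Σ f(c₁) c₂`. -/
def lact (f : C →ₗ[K] K) : C →ₗ[K] C := ctL f ∘ₗ (Coalgebra.comul (R := K))

/-- `P_f c = Σ c₁ f(c₂)`. -/
def ract (f : C →ₗ[K] K) : C →ₗ[K] C := ctR f ∘ₗ (Coalgebra.comul (R := K))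

/-- Convolution of two functionals on a coalgebra. -/
def cnv {A : Type*} [AddCommGroup A] [Module K A] [Coalgebra K A] (f g : A →ₗ[K] K) :
    A →ₗ[K] K := pair f g ∘ₗ (Coalgebra.comul (R := K))

variable (ρ : C →ₗ[K] C ⊗[K] H)

lemma act_apply (f : H →ₗ[K] K) (c : C) : act ρ f c = ctR f (ρ c) := rfl
lemma lact_apply (f : C →ₗ[K] K) (c : C) :
    lact f c = ctL f (Coalgebra.comul (R := K) c) := rfl
lemma ract_apply (f : C →ₗ[K] K) (c : C) :
    ract f c = ctR f (Coalgebra.comul (R := K) c) := rfl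

lemma lact_counit (c : C) : lact (Coalgebra.counit (R := K)) c = c := by
  rw [lact_apply, ctL]
  simp

lemma ract_counit (c : C) : ract (Coalgebra.counit (R := K)) c = c := by
  rw [ract_apply, ctR]
  simp

lemma act_counit
    (hcounit : ∀ c : C,
      (TensorProduct.rid K C) ((LinearMap.lTensor C (Coalgebra.counit (R := K))) (ρ c)) = c)
    (c : C) : act ρ (Coalgebra.counit (R := K)) c = c := by
  rw [act_apply, ctR]
  exact hcounit c

lemma act_act
    (hcoassoc : ∀ c : C, (TensorProduct.assoc K C H H)
        ((LinearMap.rTensor H ρ) (ρ c)) =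
        (LinearMap.lTensor C (Coalgebra.comul (R := K))) (ρ c))
    (f g : H →ₗ[K] K) (c : C) :
    act ρ f (act ρ g c) = act ρ (cnv f g) c := by
  rw [act_apply, act_apply, ← ctR_comm_rTensor g ρ (ρ c), ctR_ctR, hcoassoc c,
    ctR_comp_lTensor]
  rfl

lemma lact_lact (f g : C →ₗ[K] K) (c : C) :
    lact f (lact g c) = lact (cnv g f) c := by
  rw [lact_apply, lact_apply,
    ← ctL_comm_lTensor g (Coalgebra.comul (R := K)) (Coalgebra.comul (R := K) c),
    ← Coalgebra.coassoc_apply, ctL_ctL, ctL_comp_rTensor]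
  rfl

lemma ract_ract (f g : C →ₗ[K] K) (c : C) :
    ract f (ract g c) = ract (cnv f g) c := by
  rw [ract_apply, ract_apply,
    ← ctR_comm_rTensor g (Coalgebra.comul (R := K)) (Coalgebra.comul (R := K) c),
    ctR_ctR, Coalgebra.coassoc_apply, ctR_comp_lTensor]
  rfl

lemma lact_ract (f g : C →ₗ[K] K) (c : C) :
    lact f (ract g c) = ract g (lact f c) := by
  rw [lact_apply, ract_apply,
    ← ctR_comm_rTensor g (Coalgebra.comul (R := K)) (Coalgebra.comul (R := K) c),
    ctL_ctR, Coalgebra.coassoc_apply, ctL_comm_lTensor]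
  rfl

/-- Auxiliary contraction `(C ⊗ C) ⊗ H → C`, `(a ⊗ b) ⊗ h ↦ f a g h • b`. -/
def psi (f : C →ₗ[K] K) (g : H →ₗ[K] K) : (C ⊗[K] C) ⊗[K] H →ₗ[K] C :=
  ctR g ∘ₗ LinearMap.rTensor H (ctL f)

/-- Auxiliary contraction `(C ⊗ C) ⊗ H → C`, `(a ⊗ b) ⊗ h ↦ f b g h • a`. -/
def psi' (f : C →ₗ[K] K) (g : H →ₗ[K] K) : (C ⊗[K] C) ⊗[K] H →ₗ[K] C :=
  ctR g ∘ₗ LinearMap.rTensor H (ctR f)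

/-- `Σ f((c₁)₀) g((c₁)₁ (c₂)₁) • (c₂)₀` as a function of `comul c`. -/
def bigTheta (f : C →ₗ[K] K) (g : H →ₗ[K] K) : C ⊗[K] C →ₗ[K] C :=
  psi f g ∘ₗ TensorProduct.map LinearMap.id (LinearMap.mul' K H) ∘ₗ
    (TensorProduct.tensorTensorTensorComm K C H C H).toLinearMap ∘ₗ TensorProduct.map ρ ρ

def bigTheta' (f : C →ₗ[K] K) (g : H →ₗ[K] K) : C ⊗[K] C →ₗ[K] C :=
  psi' f g ∘ₗ TensorProduct.map LinearMap.id (LinearMap.mul' K H) ∘ₗ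
    (TensorProduct.tensorTensorTensorComm K C H C H).toLinearMap ∘ₗ TensorProduct.map ρ ρ

lemma lact_act_eq
    (hcompat : ∀ c : C,
        (TensorProduct.map LinearMap.id (LinearMap.mul' K H))
          ((TensorProduct.tensorTensorTensorComm K C H C H)
            ((TensorProduct.map ρ ρ) (Coalgebra.comul (R := K) c))) =
        (LinearMap.rTensor H (Coalgebra.comul (R := K))) (ρ c))
    (f : C →ₗ[K] K) (g : H →ₗ[K] K) (x : C) :
    lact f (act ρ g x) = bigTheta ρ f g (Coalgebra.comul (R := K) x) := by
  have hA : (lact f ∘ₗ ctR g : C ⊗[K] H →ₗ[K] C) =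
      psi f g ∘ₗ LinearMap.rTensor H (Coalgebra.comul (R := K)) := by
    apply TensorProduct.ext'
    intro c h
    simp [psi, lact_apply]
  calc lact f (act ρ g x) = (lact f ∘ₗ ctR g) (ρ x) := rfl
    _ = psi f g (LinearMap.rTensor H (Coalgebra.comul (R := K)) (ρ x)) := by
        rw [hA]; rfl
    _ = bigTheta ρ f g (Coalgebra.comul (R := K) x) := by
        rw [← hcompat x]; rfl

lemma ract_act_eq
    (hcompat : ∀ c : C,
        (TensorProduct.map LinearMap.id (LinearMap.mul' K H))
          ((TensorProduct.tensorTensorTensorComm K C H C H)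
            ((TensorProduct.map ρ ρ) (Coalgebra.comul (R := K) c))) =
        (LinearMap.rTensor H (Coalgebra.comul (R := K))) (ρ c))
    (f : C →ₗ[K] K) (g : H →ₗ[K] K) (x : C) :
    ract f (act ρ g x) = bigTheta' ρ f g (Coalgebra.comul (R := K) x) := by
  have hA : (ract f ∘ₗ ctR g : C ⊗[K] H →ₗ[K] C) =
      psi' f g ∘ₗ LinearMap.rTensor H (Coalgebra.comul (R := K)) := by
    apply TensorProduct.ext'
    intro c h
    simp [psi', ract_apply]
  calc ract f (act ρ g x) = (ract f ∘ₗ ctR g) (ρ x) := rfl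
    _ = psi' f g (LinearMap.rTensor H (Coalgebra.comul (R := K)) (ρ x)) := by
        rw [hA]; rfl
    _ = bigTheta' ρ f g (Coalgebra.comul (R := K) x) := by
        rw [← hcompat x]; rfl

lemma psi_tmul_tmul (f : C →ₗ[K] K) (g : H →ₗ[K] K) (u v : C ⊗[K] H) :
    psi f g ((TensorProduct.map LinearMap.id (LinearMap.mul' K H))
      ((TensorProduct.tensorTensorTensorComm K C H C H) (u ⊗ₜ[K] v))) =
    ctR (g ∘ₗ (LinearMap.mul K H) (ctL f u)) v := by
  induction u using TensorProduct.induction_on with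
  | zero => simp
  | tmul x s =>
    induction v using TensorProduct.induction_on with
    | zero => simp
    | tmul y t =>
      simp [psi, LinearMap.mul_apply', TensorProduct.smul_tmul', smul_smul, mul_comm,
        smul_mul_assoc]
    | add v1 v2 h1 h2 =>
      rw [TensorProduct.tmul_add, map_add, map_add, map_add, h1, h2, map_add]
  | add u1 u2 h1 h2 =>
    rw [TensorProduct.add_tmul, map_add, map_add, map_add, h1, h2, map_add, map_add,
      LinearMap.comp_add, ctR_f_add]

lemma psi'_tmul_tmul (f : C →ₗ[K] K) (g : H →ₗ[K] K) (u v : C ⊗[K] H) :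
    psi' f g ((TensorProduct.map LinearMap.id (LinearMap.mul' K H))
      ((TensorProduct.tensorTensorTensorComm K C H C H) (u ⊗ₜ[K] v))) =
    ctR (g ∘ₗ (LinearMap.mul K H).flip (ctL f v)) u := by
  induction v using TensorProduct.induction_on with
  | zero => simp
  | tmul y t =>
    induction u using TensorProduct.induction_on with
    | zero => simp
    | tmul x s =>
      simp [psi', LinearMap.mul_apply', TensorProduct.smul_tmul', smul_smul, mul_comm,
        smul_mul_assoc, mul_smul_comm]
    | add u1 u2 h1 h2 =>
      rw [TensorProduct.add_tmul, map_add, map_add, map_add, h1, h2, map_add]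
  | add v1 v2 h1 h2 =>
    rw [TensorProduct.tmul_add, map_add, map_add, map_add, h1, h2, map_add, map_add,
      LinearMap.comp_add, ctR_f_add]

lemma bigTheta_tmul (f : C →ₗ[K] K) (g : H →ₗ[K] K) (a b : C) :
    bigTheta ρ f g (a ⊗ₜ[K] b) = act ρ (g ∘ₗ (LinearMap.mul K H) (ctL f (ρ a))) b := by
  have h0 : (TensorProduct.map ρ ρ) (a ⊗ₜ[K] b) = ρ a ⊗ₜ[K] ρ b := by simp
  calc bigTheta ρ f g (a ⊗ₜ[K] b)
      = psi f g ((TensorProduct.map LinearMap.id (LinearMap.mul' K H))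
          ((TensorProduct.tensorTensorTensorComm K C H C H) (ρ a ⊗ₜ[K] ρ b))) := by
        rw [bigTheta]; simp only [LinearMap.coe_comp, Function.comp_apply,
          LinearEquiv.coe_coe, h0]
    _ = ctR (g ∘ₗ (LinearMap.mul K H) (ctL f (ρ a))) (ρ b) := psi_tmul_tmul f g _ _
    _ = act ρ (g ∘ₗ (LinearMap.mul K H) (ctL f (ρ a))) b := rfl

lemma bigTheta'_tmul (f : C →ₗ[K] K) (g : H →ₗ[K] K) (a b : C) :
    bigTheta' ρ f g (a ⊗ₜ[K] b) = act ρ (g ∘ₗ (LinearMap.mul K H).flip (ctL f (ρ b))) a := by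
  have h0 : (TensorProduct.map ρ ρ) (a ⊗ₜ[K] b) = ρ a ⊗ₜ[K] ρ b := by simp
  calc bigTheta' ρ f g (a ⊗ₜ[K] b)
      = psi' f g ((TensorProduct.map LinearMap.id (LinearMap.mul' K H))
          ((TensorProduct.tensorTensorTensorComm K C H C H) (ρ a ⊗ₜ[K] ρ b))) := by
        rw [bigTheta']; simp only [LinearMap.coe_comp, Function.comp_apply,
          LinearEquiv.coe_coe, h0]
    _ = ctR (g ∘ₗ (LinearMap.mul K H).flip (ctL f (ρ b))) (ρ a) := psi'_tmul_tmul f g _ _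
    _ = act ρ (g ∘ₗ (LinearMap.mul K H).flip (ctL f (ρ b))) a := rfl

/-- Generators of the finite-dimensional simultaneous sub(comodule/coalgebra) containing `c`. -/
def gens (c : C) : Set C :=
  {x | ∃ (u : H →ₗ[K] K) (v w : C →ₗ[K] K), x = act ρ u (lact v (ract w c))}

def oD (c : C) : Submodule K C := Submodule.span K (gens ρ c)

lemma self_mem_oD
    (hcounit : ∀ c : C,
      (TensorProduct.rid K C) ((LinearMap.lTensor C (Coalgebra.counit (R := K))) (ρ c)) = c)
    (c : C) : c ∈ oD ρ c :=
  Submodule.subset_span ⟨Coalgebra.counit, Coalgebra.counit, Coalgebra.counit, by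
    rw [ract_counit, lact_counit, act_counit ρ hcounit]⟩

lemma oD_stable_act
    (hcoassoc : ∀ c : C, (TensorProduct.assoc K C H H)
        ((LinearMap.rTensor H ρ) (ρ c)) =
        (LinearMap.lTensor C (Coalgebra.comul (R := K))) (ρ c))
    (c : C) (e : H →ₗ[K] K) : ∀ x ∈ oD ρ c, act ρ e x ∈ oD ρ c := by
  intro x hx
  have hmap : Submodule.map (act ρ e) (oD ρ c) ≤ oD ρ c := by
    rw [oD, Submodule.map_span, Submodule.span_le]
    rintro _ ⟨_, ⟨u, v, w, rfl⟩, rfl⟩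
    exact Submodule.subset_span ⟨cnv e u, v, w, act_act ρ hcoassoc e u _⟩
  exact hmap ⟨x, hx, rfl⟩

lemma oD_stable_lact
    (hcompat : ∀ c : C,
        (TensorProduct.map LinearMap.id (LinearMap.mul' K H))
          ((TensorProduct.tensorTensorTensorComm K C H C H)
            ((TensorProduct.map ρ ρ) (Coalgebra.comul (R := K) c))) =
        (LinearMap.rTensor H (Coalgebra.comul (R := K))) (ρ c))
    (c : C) (e : C →ₗ[K] K) : ∀ x ∈ oD ρ c, lact e x ∈ oD ρ c := by
  intro x hx
  have hmap : Submodule.map (lact e) (oD ρ c) ≤ oD ρ c := by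
    rw [oD, Submodule.map_span, Submodule.span_le]
    rintro _ ⟨_, ⟨u, v, w, rfl⟩, rfl⟩
    set y := lact v (ract w c) with hy
    rw [lact_act_eq ρ hcompat e u y]
    set Rc : Submodule K C :=
      Submodule.span K (Set.range fun v' : C →ₗ[K] K => lact v' y) with hRc
    have hΔ : Coalgebra.comul (R := K) y ∈
        LinearMap.range (LinearMap.lTensor C Rc.subtype) :=
      mem_range_lTensor_of_ctL _ _ (fun f => Submodule.subset_span ⟨f, rfl⟩)
    refine image_lTensor_range_mem (bigTheta ρ e u) Rc (oD ρ c) ?_ _ hΔ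
    intro a b hb
    rw [bigTheta_tmul]
    have hsub : Submodule.map (act ρ (u ∘ₗ (LinearMap.mul K H) (ctL e (ρ a)))) Rc ≤ oD ρ c := by
      rw [hRc, Submodule.map_span, Submodule.span_le]
      rintro _ ⟨_, ⟨v', rfl⟩, rfl⟩
      refine Submodule.subset_span ⟨u ∘ₗ (LinearMap.mul K H) (ctL e (ρ a)), cnv v v', w, ?_⟩
      show act ρ _ (lact v' y) = act ρ _ (lact (cnv v v') (ract w c))
      rw [hy, lact_lact]
    exact hsub ⟨b, hb, rfl⟩
  exact hmap ⟨x, hx, rfl⟩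

lemma oD_stable_ract
    (hcompat : ∀ c : C,
        (TensorProduct.map LinearMap.id (LinearMap.mul' K H))
          ((TensorProduct.tensorTensorTensorComm K C H C H)
            ((TensorProduct.map ρ ρ) (Coalgebra.comul (R := K) c))) =
        (LinearMap.rTensor H (Coalgebra.comul (R := K))) (ρ c))
    (c : C) (e : C →ₗ[K] K) : ∀ x ∈ oD ρ c, ract e x ∈ oD ρ c := by
  intro x hx
  have hmap : Submodule.map (ract e) (oD ρ c) ≤ oD ρ c := by
    rw [oD, Submodule.map_span, Submodule.span_le]
    rintro _ ⟨_, ⟨u, v, w, rfl⟩, rfl⟩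
    set y := lact v (ract w c) with hy
    rw [ract_act_eq ρ hcompat e u y]
    set Lc : Submodule K C :=
      Submodule.span K (Set.range fun w' : C →ₗ[K] K => ract w' y) with hLc
    have hΔ : Coalgebra.comul (R := K) y ∈
        LinearMap.range (LinearMap.rTensor C Lc.subtype) :=
      mem_range_rTensor_of_ctR _ _ (fun f => Submodule.subset_span ⟨f, rfl⟩)
    refine image_rTensor_range_mem (bigTheta' ρ e u) Lc (oD ρ c) ?_ _ hΔ
    intro a ha b
    rw [bigTheta'_tmul]
    have hsub : Submodule.map (act ρ (u ∘ₗ (LinearMap.mul K H).flip (ctL e (ρ b)))) Lc ≤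
        oD ρ c := by
      rw [hLc, Submodule.map_span, Submodule.span_le]
      rintro _ ⟨_, ⟨w', rfl⟩, rfl⟩
      refine Submodule.subset_span ⟨u ∘ₗ (LinearMap.mul K H).flip (ctL e (ρ b)), v,
        cnv w' w, ?_⟩
      show act ρ _ (ract w' y) = act ρ _ (lact v (ract (cnv w' w) c))
      rw [hy, ← lact_ract, ract_ract]
    exact hsub ⟨a, ha, rfl⟩
  exact hmap ⟨x, hx, rfl⟩

lemma oD_findim (c : C) : FiniteDimensional K (oD ρ c) := by
  classical
  obtain ⟨G₁, h₁⟩ := exists_finset_ctR (Coalgebra.comul (R := K) c)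
  choose G₂ h₂ using fun a : C => exists_finset_ctL (Coalgebra.comul (R := K) a)
  choose G₃ h₃ using fun b : C => exists_finset_ctR (ρ b)
  set X₂ : Finset C := G₁.biUnion G₂ with hX₂
  set E : Finset C := X₂.biUnion G₃ with hE
  have hle : oD ρ c ≤ Submodule.span K (E : Set C) := by
    rw [oD, Submodule.span_le]
    rintro _ ⟨u, v, w, rfl⟩
    have s1 : ract w c ∈ Submodule.span K (G₁ : Set C) := h₁ w
    have s2 : lact v (ract w c) ∈ Submodule.span K (X₂ : Set C) := by
      have hm : Submodule.map (lact v) (Submodule.span K (G₁ : Set C)) ≤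
          Submodule.span K (X₂ : Set C) := by
        rw [Submodule.map_span, Submodule.span_le]
        rintro _ ⟨a, ha, rfl⟩
        refine Submodule.span_mono ?_ (h₂ a v)
        intro z hz
        exact Finset.mem_coe.2 (Finset.mem_biUnion.2 ⟨a, Finset.mem_coe.1 ha, Finset.mem_coe.1 hz⟩)
      exact hm ⟨_, s1, rfl⟩
    have s3 : act ρ u (lact v (ract w c)) ∈ Submodule.span K (E : Set C) := by
      have hm : Submodule.map (act ρ u) (Submodule.span K (X₂ : Set C)) ≤
          Submodule.span K (E : Set C) := by
        rw [Submodule.map_span, Submodule.span_le]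
        rintro _ ⟨b, hb, rfl⟩
        refine Submodule.span_mono ?_ (h₃ b u)
        intro z hz
        exact Finset.mem_coe.2 (Finset.mem_biUnion.2 ⟨b, Finset.mem_coe.1 hb, Finset.mem_coe.1 hz⟩)
      exact hm ⟨_, s2, rfl⟩
    exact s3
  have : FiniteDimensional K (Submodule.span K (E : Set C)) :=
    FiniteDimensional.span_of_finite K (E.finite_toSet)
  exact Submodule.finiteDimensional_of_le hle

lemma sup_stable {T : V →ₗ[K] V} {D₁ D₂ : Submodule K V}
    (h₁ : ∀ x ∈ D₁, T x ∈ D₁) (h₂ : ∀ x ∈ D₂, T x ∈ D₂) :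
    ∀ x ∈ D₁ ⊔ D₂, T x ∈ D₁ ⊔ D₂ := by
  intro x hx
  obtain ⟨a, ha, b, hb, rfl⟩ := Submodule.mem_sup.1 hx
  rw [map_add]
  exact Submodule.add_mem _ (Submodule.mem_sup_left (h₁ a ha)) (Submodule.mem_sup_right (h₂ b hb))

lemma finset_sup_stable {ι : Type*} (T : V →ₗ[K] V) (t : Finset ι) (f : ι → Submodule K V)
    (h : ∀ i ∈ t, ∀ x ∈ f i, T x ∈ f i) : ∀ x ∈ t.sup f, T x ∈ t.sup f := by
  classical
  induction t using Finset.induction_on with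
  | empty =>
    intro x hx
    rw [Finset.sup_empty, Submodule.mem_bot] at hx ⊢
    rw [hx, map_zero]
  | insert a s hni ih =>
    rw [Finset.sup_insert]
    exact sup_stable (h a (Finset.mem_insert_self a s))
      (ih fun i hi => h i (Finset.mem_insert_of_mem hi))

end Main

end FinThm

end FinThmAux



/-- **Finiteness theorem for comodule coalgebras** (Section 4).
Let `H` be a bialgebra over a field `K` and `C` a right `H`-comodule coalgebra with
coaction `ρ`.  Then every finite subset `F` of `C` is contained in a finite-dimensional
subspace `D` of `C` which is simultaneously a right `H`-subcomodule and a
subcoalgebra of `C`. -/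
theorem finiteness_comodule_coalgebras
    (K : Type*) [Field K] (H : Type*) [Ring H] [Bialgebra K H]
    (C : Type*) [AddCommGroup C] [Module K C] [Coalgebra K C]
    (ρ : C →ₗ[K] C ⊗[K] H)
    -- comodule coassociativity: (ρ ⊗ 1) ∘ ρ = (1 ⊗ Δ_H) ∘ ρ
    (hcoassoc : ∀ c : C, (TensorProduct.assoc K C H H)
        ((LinearMap.rTensor H ρ) (ρ c)) =
        (LinearMap.lTensor C (Coalgebra.comul (R := K))) (ρ c))
    -- comodule counit axiom: (1 ⊗ ε_H) ∘ ρ = id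
    (hcounit : ∀ c : C,
        (TensorProduct.rid K C) ((LinearMap.lTensor C (Coalgebra.counit (R := K))) (ρ c)) = c)
    -- comodule-coalgebra axiom:
    -- Σ (c₍₁₎)₀ ⊗ (c₍₂₎)₀ ⊗ (c₍₁₎)₁(c₍₂₎)₁ = Σ (c₀)₍₁₎ ⊗ (c₀)₍₂₎ ⊗ c₁
    (hcompat : ∀ c : C,
        (TensorProduct.map LinearMap.id (LinearMap.mul' K H))
          ((TensorProduct.tensorTensorTensorComm K C H C H)
            ((TensorProduct.map ρ ρ) (Coalgebra.comul (R := K) c))) =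
        (LinearMap.rTensor H (Coalgebra.comul (R := K))) (ρ c))
    -- comodule-coalgebra counit axiom: Σ ε_C(c₀) c₁ = ε_C(c) 1_H
    (hcompat' : ∀ c : C,
        (TensorProduct.lid K H) ((LinearMap.rTensor H (Coalgebra.counit (R := K))) (ρ c)) =
        (Coalgebra.counit (R := K) c) • (1 : H))
    (F : Set C) (hF : F.Finite) :
    ∃ D : Submodule K C, F ⊆ D ∧ FiniteDimensional K D ∧ IsSubcoalgebra D ∧
      (∀ x ∈ D, ρ x ∈ LinearMap.range (LinearMap.rTensor H D.subtype)) := by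
  classical
  set t := hF.toFinset with ht
  set D : Submodule K C := t.sup (fun c => FinThm.oD ρ c) with hD
  have stabA : ∀ e : H →ₗ[K] K, ∀ x ∈ D, FinThm.act ρ e x ∈ D := fun e =>
    FinThm.finset_sup_stable (FinThm.act ρ e) t _
      (fun i _ => FinThm.oD_stable_act ρ hcoassoc i e)
  have stabL : ∀ e : C →ₗ[K] K, ∀ x ∈ D, FinThm.lact e x ∈ D := fun e =>
    FinThm.finset_sup_stable (FinThm.lact e) t _
      (fun i _ => FinThm.oD_stable_lact ρ hcompat i e)
  have stabR : ∀ e : C →ₗ[K] K, ∀ x ∈ D, FinThm.ract e x ∈ D := fun e =>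
    FinThm.finset_sup_stable (FinThm.ract e) t _
      (fun i _ => FinThm.oD_stable_ract ρ hcompat i e)
  haveI hfd : FiniteDimensional K D := by
    haveI : ∀ i : C, FiniteDimensional K (FinThm.oD ρ i) := fun i => FinThm.oD_findim ρ i
    exact Submodule.finiteDimensional_finset_sup t _
  refine ⟨D, ?_, hfd, ?_, ?_⟩
  · intro c hc
    exact Finset.le_sup (f := fun c => FinThm.oD ρ c) (hF.mem_toFinset.2 hc)
      (FinThm.self_mem_oD ρ hcounit c)
  · show ∀ x ∈ D, Coalgebra.comul (R := K) x ∈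
      LinearMap.range (TensorProduct.map D.subtype D.subtype)
    intro x hx
    exact FinThm.mem_range_map_of_ranges _ _
      (FinThm.mem_range_rTensor_of_ctR _ _ (fun f => stabR f x hx))
      (FinThm.mem_range_lTensor_of_ctL _ _ (fun f => stabL f x hx))
  · intro x hx
    exact FinThm.mem_range_rTensor_of_ctR _ _ (fun f => stabA f x hx)
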